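/- Let π be a context adaptive ordering family over Σ and let s and s' be primitive strings of the same length n over Σ such that BWT*(s) = BWT*(s') (both computed with respect to π). Then for every string x with |x| ≤ n, the range of rows of M*(s) prefixed by x equals the range of rows of M*(s') prefixed by x, i.e., Rng_s(x) = Rng_{s'}(x); in particular, the number of occurrences of x as a circular factor of s equals the number of occurrences of x as a circular factor of s'. -/

import Mathlib

/-- The cyclic rotation of `s` by `r`: `s[r+1..n] s[1..r]`. -/
def rot {α : Type*} (s : List α) (r : ℕ) : List α := s.drop r ++ s.take r

/-- A string is primitive if its cyclic rotations are pairwise distinct. -/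
def IsPrimitive {α : Type*} (s : List α) : Prop :=
  ∀ r₁ r₂ : ℕ, r₁ < s.length → r₂ < s.length → rot s r₁ = rot s r₂ → r₁ = r₂

/-- The context adaptive order induced by a family `π` of linear orders on the
alphabet, one for each string (context): `u ≺ v` iff, `x = u[1..k] = v[1..k]`
being the longest common prefix of `u` and `v`, the symbol `u[k+1]` is
`π x`-smaller than `v[k+1]`. -/
def caLt {α : Type*} (π : List α → LinearOrder α) (u v : List α) : Prop :=
  ∃ (k : ℕ) (hu : k < u.length) (hv : k < v.length),
    u.take k = v.take k ∧ (π (u.take k)).lt (u.get ⟨k, hu⟩) (v.get ⟨k, hv⟩)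

/-- The matrix `M*(s)`: an enumeration of the cyclic rotations of `s`
listed in `≺`-increasing order; the `i`-th row is `row i`. -/
structure SortedRotMatrix {α : Type*} (π : List α → LinearOrder α) (s : List α) where
  row : Fin s.length → List α
  row_is_rot : ∀ i, ∃ r : Fin s.length, row i = rot s (r : ℕ)
  rot_is_row : ∀ r : Fin s.length, ∃ i, row i = rot s (r : ℕ)
  sorted : ∀ i j : Fin s.length, i < j → caLt π (row i) (row j)

/-- `Rng M x`: the set of row indices of `M*(s)` whose row has `x` as a prefix. -/
def Rng {α : Type*} [DecidableEq α] {π : List α → LinearOrder α} {s : List α}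
    (M : SortedRotMatrix π s) (x : List α) : Finset (Fin s.length) :=
  Finset.univ.filter (fun i => x <+: M.row i)


open Finset

section Aux
variable {α : Type*}

lemma rot_length (s : List α) (r : ℕ) : (rot s r).length = s.length := by
  simp [rot]; omega

lemma caLt_irrefl (π : List α → LinearOrder α) (u : List α) : ¬ caLt π u u := by
  rintro ⟨k, hu, hv, _, hlt⟩
  letI := π (u.take k)
  exact lt_irrefl _ hlt

lemma row_inj (π : List α → LinearOrder α) {s : List α} (M : SortedRotMatrix π s) :
    Function.Injective M.row := by
  intro i j h
  by_contra hne
  rcases lt_or_gt_of_ne hne with hij | hij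
  · have := M.sorted i j hij; rw [h] at this; exact caLt_irrefl π _ this
  · have := M.sorted j i hij; rw [h] at this; exact caLt_irrefl π _ this

lemma row_length (π : List α → LinearOrder α) {s : List α} (M : SortedRotMatrix π s)
    (i : Fin s.length) : (M.row i).length = s.length := by
  obtain ⟨r, hr⟩ := M.row_is_rot i
  rw [hr, rot_length]

lemma count_row_eq_count_rot (π : List α → LinearOrder α) {s : List α}
    (hp : IsPrimitive s) (M : SortedRotMatrix π s) (P : List α → Prop) [DecidablePred P] :
    (Finset.univ.filter fun i : Fin s.length => P (M.row i)).card
      = (Finset.univ.filter fun r : Fin s.length => P (rot s (r : ℕ))).card := by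
  classical
  choose g hg using M.rot_is_row
  have hginj : Function.Injective g := by
    intro a b hab
    have h1 : rot s (a : ℕ) = rot s (b : ℕ) := by rw [← hg a, ← hg b, hab]
    exact Fin.ext (hp a b a.isLt b.isLt h1)
  have himg : (Finset.univ.filter fun r : Fin s.length => P (rot s (r : ℕ))).image g
      = Finset.univ.filter fun i => P (M.row i) := by
    ext i
    simp only [mem_image, mem_filter, mem_univ, true_and]
    constructor
    · rintro ⟨r, hr, rfl⟩; rw [hg]; exact hr
    · intro hPi
      obtain ⟨r, hr⟩ := M.row_is_rot i
      exact ⟨r, by rw [← hr]; exact hPi, row_inj π M (by rw [hg, hr])⟩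
  rw [← himg, Finset.card_image_of_injective _ hginj]

lemma snoc_prefix_iff (y l : List α) (c d : α) (h : y.length < l.length) :
    (y ++ [c] <+: l) ↔ (y <+: l ∧ l.getD y.length d = c) := by
  rw [List.getD_eq_getElem l d h]
  constructor
  · intro hpre
    refine ⟨(List.prefix_append y [c]).trans hpre, ?_⟩
    have h2 : (y ++ [c])[y.length]'(by simp) = l[y.length] :=
      hpre.getElem (by simp)
    rw [List.getElem_concat_length rfl] at h2
    exact h2.symm
  · rintro ⟨h1, h2⟩
    have ht : y = l.take y.length := List.prefix_iff_eq_take.mp h1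
    have ht2 : y ++ [c] = l.take (y.length + 1) := by
      rw [List.take_succ, List.getElem?_eq_getElem h]
      simp [← ht, h2]
    rw [ht2]
    exact List.take_prefix _ _

lemma key_iff (s : List α) {j : ℕ} (hj : j < s.length) (c : α) {t : List α}
    (ht : t.length + 1 ≤ s.length) :
    ((c :: t) <+: rot s j) ↔
      (t <+: rot s ((j + 1) % s.length) ∧ (rot s ((j + 1) % s.length)).getLast? = some c) := by
  have hA : (s.drop (j+1) ++ s.take j).length = s.length - 1 := by
    simp; omega
  have h1 : rot s ((j + 1) % s.length) = (s.drop (j+1) ++ s.take j) ++ [s[j]] := by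
    rcases eq_or_lt_of_le (Nat.succ_le_of_lt hj) with heq | hlt
    · have heq : j + 1 = s.length := heq
      rw [heq, Nat.mod_self]
      have hd : s.drop (j+1) = [] := by rw [List.drop_eq_nil_iff]; omega
      have htk : s.take j ++ [s[j]] = s := by
        have := (List.take_succ (l := s) (i := j)).symm
        rw [List.getElem?_eq_getElem hj] at this
        simpa [heq] using this
      simp [rot, hd, htk, List.append_assoc]
    · rw [Nat.mod_eq_of_lt hlt]
      show s.drop (j+1) ++ s.take (j+1) = _
      rw [List.take_succ, List.getElem?_eq_getElem hj]
      simp [List.append_assoc]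
  have h2 : rot s j = s[j] :: (s.drop (j+1) ++ s.take j) := by
    unfold rot
    rw [List.drop_eq_getElem_cons hj, List.cons_append]
  rw [h1, h2, List.cons_prefix_cons, List.getLast?_concat]
  constructor
  · rintro ⟨rfl, hpre⟩
    exact ⟨hpre.trans (List.prefix_append _ _), rfl⟩
  · rintro ⟨hpre, hlast⟩
    have hc : s[j] = c := by injection hlast
    refine ⟨hc.symm, ?_⟩
    have := List.prefix_iff_eq_take.mp hpre
    rw [List.take_append_of_le_length (by omega)] at this
    exact this ▸ List.take_prefix _ _

end Aux

section Aux3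
variable {α : Type*}

lemma mono_row (π : List α → LinearOrder α) {s : List α} (M : SortedRotMatrix π s)
    {y : List α} (hy : y.length < s.length) (d0 : α) {i j : Fin s.length}
    (hi : y <+: M.row i) (hj : y <+: M.row j) (hij : i ≤ j) :
    (π y).le ((M.row i).getD y.length d0) ((M.row j).getD y.length d0) := by
  letI := π y
  rcases eq_or_lt_of_le hij with rfl | hlt
  · exact le_refl _
  obtain ⟨k, hu, hv, htake, hlt2⟩ := M.sorted i j hlt
  have hul : (M.row i).length = s.length := row_length π M i
  have hvl : (M.row j).length = s.length := row_length π M j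
  have hmu : y.length < (M.row i).length := by omega
  have hmv : y.length < (M.row j).length := by omega
  rw [List.getD_eq_getElem _ _ hmu, List.getD_eq_getElem _ _ hmv]
  rcases lt_trichotomy k y.length with hk | hk | hk
  · exfalso
    have h1 : (M.row i).get ⟨k, hu⟩ = y[k]'hk := by
      rw [List.get_eq_getElem]
      exact (hi.getElem hk).symm
    have h2 : (M.row j).get ⟨k, hv⟩ = y[k]'hk := by
      rw [List.get_eq_getElem]
      exact (hj.getElem hk).symm
    rw [h1, h2] at hlt2
    letI := π ((M.row i).take k)
    exact lt_irrefl _ hlt2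
  · subst hk
    have hctx : (M.row i).take y.length = y := (List.prefix_iff_eq_take.mp hi).symm
    rw [hctx] at hlt2
    have h3 : (M.row i)[y.length]'hmu < (M.row j)[y.length]'hmv := hlt2
    exact le_of_lt h3
  · have hget : (M.row i)[y.length]'hmu = (M.row j)[y.length]'hmv := by
      have h1 : ((M.row i).take k)[y.length]'(by rw [List.length_take]; omega)
          = (M.row i)[y.length]'hmu := List.getElem_take
      have h2 : ((M.row j).take k)[y.length]'(by rw [List.length_take]; omega)
          = (M.row j)[y.length]'hmv := List.getElem_take
      rw [← h1, ← h2]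
      congr 1
    rw [hget]

lemma rot_count_step [DecidableEq α] (s : List α) (c : α) (t : List α)
    (ht : t.length + 1 ≤ s.length) :
    (univ.filter fun r : Fin s.length => (c :: t) <+: rot s (r : ℕ)).card
      = (univ.filter fun r : Fin s.length =>
          t <+: rot s (r : ℕ) ∧ (rot s (r : ℕ)).getLast? = some c).card := by
  haveI : NeZero s.length := ⟨by omega⟩
  apply Finset.card_equiv (Equiv.addRight (1 : Fin s.length))
  intro r
  have hval : ((r + 1 : Fin s.length) : ℕ) = ((r : ℕ) + 1) % s.length := by
    rw [Fin.val_add, Fin.val_one']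
    conv_rhs => rw [Nat.add_mod]
    rw [Nat.add_mod, Nat.mod_mod_of_dvd _ dvd_rfl]
  simp only [mem_filter, mem_univ, true_and, Equiv.coe_addRight, hval]
  exact key_iff s r.isLt c ht

end Aux3

lemma mem_Rng {α : Type*} [DecidableEq α] {π : List α → LinearOrder α} {s : List α}
    (M : SortedRotMatrix π s) (x : List α) (i : Fin s.length) :
    i ∈ Rng M x ↔ x <+: M.row i := by
  simp [Rng]

section Aux2

variable {α : Type*}

lemma downclosed_eq {ι : Type*} [LinearOrder ι] {R A B : Finset ι}
    (hA : A ⊆ R) (hB : B ⊆ R)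
    (hAd : ∀ i ∈ R, ∀ j ∈ A, i ≤ j → i ∈ A) (hBd : ∀ i ∈ R, ∀ j ∈ B, i ≤ j → i ∈ B)
    (hcard : A.card = B.card) : A = B := by
  have hsub : A ⊆ B := by
    intro a ha
    by_contra hab
    have hBA : B ⊆ A := by
      intro b hb
      rcases le_total a b with hle | hle
      · exact absurd (hBd a (hA ha) b hb hle) hab
      · exact hAd b (hB hb) a ha hle
    have hss : B ⊂ A := ⟨hBA, fun h => hab (h ha)⟩
    have := Finset.card_lt_card hss
    omega
  exact Finset.eq_of_subset_of_card_le hsub hcard.ge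

lemma mono_fiber {ι : Type*} [LinearOrder ι] [Fintype α] [DecidableEq α]
    (LO : LinearOrder α) (R : Finset ι) (g h : ι → α)
    (hg : ∀ i ∈ R, ∀ j ∈ R, i ≤ j → LO.le (g i) (g j))
    (hh : ∀ i ∈ R, ∀ j ∈ R, i ≤ j → LO.le (h i) (h j))
    (hcard : ∀ d : α, (R.filter (fun i => g i = d)).card = (R.filter (fun i => h i = d)).card) :
    ∀ i ∈ R, g i = h i := by
  letI := LO
  have hg' : ∀ i ∈ R, ∀ j ∈ R, i ≤ j → g i ≤ g j := hg
  have hh' : ∀ i ∈ R, ∀ j ∈ R, i ≤ j → h i ≤ h j := hh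
  have key : ∀ d : α, R.filter (fun i => g i < d) = R.filter (fun i => h i < d) := by
    intro d
    have cardsum : ∀ f : ι → α, (∀ i ∈ R, ∀ j ∈ R, i ≤ j → f i ≤ f j) →
        (R.filter (fun i => f i < d)).card
          = ∑ b ∈ univ.filter (fun b : α => b < d), (R.filter (fun i => f i = b)).card := by
      intro f _
      rw [Finset.card_eq_sum_card_fiberwise (f := f) (t := univ.filter (fun b : α => b < d))
        (fun i hi => by simp only [Finset.mem_coe, mem_filter, mem_univ, true_and] at hi ⊢; exact hi.2)]
      refine Finset.sum_congr rfl ?_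
      intro b hb
      simp only [mem_filter, mem_univ, true_and] at hb
      congr 1
      ext i
      simp only [mem_filter]
      constructor
      · rintro ⟨⟨h1, _⟩, h3⟩; exact ⟨h1, h3⟩
      · rintro ⟨h1, h3⟩; exact ⟨⟨h1, h3 ▸ hb⟩, h3⟩
    apply downclosed_eq (Finset.filter_subset _ _) (Finset.filter_subset _ _)
    · intro i hi j hj hij
      simp only [mem_filter] at hj ⊢
      exact ⟨hi, lt_of_le_of_lt (hg' i hi j hj.1 hij) hj.2⟩
    · intro i hi j hj hij
      simp only [mem_filter] at hj ⊢
      exact ⟨hi, lt_of_le_of_lt (hh' i hi j hj.1 hij) hj.2⟩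
    · rw [cardsum g hg', cardsum h hh']
      exact Finset.sum_congr rfl fun b _ => hcard b
  intro i hi
  by_contra hne
  rcases lt_or_gt_of_ne hne with hlt | hlt
  · have h1 : i ∈ R.filter (fun i => g i < h i) := by exact mem_filter.mpr ⟨hi, hlt⟩
    have h2 : i ∈ R.filter (fun j => g j < h i) := mem_filter.mpr ⟨hi, hlt⟩
    rw [key (h i)] at h2
    exact absurd (mem_filter.mp h2).2 (lt_irrefl _)
  · have h2 : i ∈ R.filter (fun j => h j < g i) := mem_filter.mpr ⟨hi, hlt⟩
    rw [← key (g i)] at h2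
    exact absurd (mem_filter.mp h2).2 (lt_irrefl _)

end Aux2


/-- If two primitive strings of the same length have the same context adaptive
BWT (w.r.t. the same family `π`), then for every string `x` the range of rows
prefixed by `x` is the same in the two matrices; in particular `x` has the same
number of occurrences as a circular factor of `s` and of `s'`. -/
theorem rng_eq_of_bwt_eq {α : Type*} [Fintype α] [Nonempty α] [DecidableEq α]
    (π : List α → LinearOrder α) (s s' : List α) (hlen : s.length = s'.length)
    (hp : IsPrimitive s) (hp' : IsPrimitive s')
    (M : SortedRotMatrix π s) (M' : SortedRotMatrix π s')
    (hbwt : ∀ i : Fin s.length,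
      (M.row i).getLast? = (M'.row (Fin.cast hlen i)).getLast?) :
    ∀ x : List α, x.length ≤ s.length →
      (∀ i : Fin s.length, i ∈ Rng M x ↔ Fin.cast hlen i ∈ Rng M' x) ∧
      ((Finset.range s.length).filter (fun j => x <+: rot s j)).card
        = ((Finset.range s'.length).filter (fun j => x <+: rot s' j)).card := by
  classical
  have main : ∀ m : ℕ, m ≤ s.length → ∀ x : List α, x.length = m →
      ∀ i : Fin s.length, (i ∈ Rng M x ↔ Fin.cast hlen i ∈ Rng M' x) := by
    intro m
    induction m with
    | zero =>
      intro _ x hx i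
      have hx0 : x = [] := List.eq_nil_of_length_eq_zero hx
      subst hx0
      simp only [mem_Rng]
      simp [List.nil_prefix]
    | succ m IH =>
      intro hm1 x hx i
      have hm : m ≤ s.length := by omega
      have hm1' : m + 1 ≤ s'.length := by omega
      -- count equality at length m+1
      have countEq : ∀ z : List α, z.length = m + 1 → (Rng M z).card = (Rng M' z).card := by
        intro z hz
        obtain ⟨c, t, rfl⟩ : ∃ c t, z = c :: t := by
          cases z with
          | nil => simp at hz
          | cons c t => exact ⟨c, t, rfl⟩
        have htlen : t.length = m := by simpa using hz
        have e1 : (Rng M (c :: t)).card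
            = (Finset.univ.filter fun r : Fin s.length => (c :: t) <+: rot s (r : ℕ)).card :=
          count_row_eq_count_rot π hp M (fun l => (c :: t) <+: l)
        have e2 := rot_count_step s c t (by omega)
        have e3 : (Finset.univ.filter fun r : Fin s.length =>
              t <+: rot s (r : ℕ) ∧ (rot s (r : ℕ)).getLast? = some c).card
            = (Finset.univ.filter fun i : Fin s.length =>
              t <+: M.row i ∧ (M.row i).getLast? = some c).card :=
          (count_row_eq_count_rot π hp M (fun l => t <+: l ∧ l.getLast? = some c)).symm
        have e4 : (Finset.univ.filter fun i : Fin s.length =>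
              t <+: M.row i ∧ (M.row i).getLast? = some c).card
            = (Finset.univ.filter fun i' : Fin s'.length =>
              t <+: M'.row i' ∧ (M'.row i').getLast? = some c).card := by
          apply Finset.card_equiv (finCongr hlen)
          intro i
          simp only [Finset.mem_filter, Finset.mem_univ, true_and, finCongr_apply]
          have h1 := IH hm t htlen i
          rw [mem_Rng, mem_Rng] at h1
          rw [h1, hbwt i]
        have e5 : (Finset.univ.filter fun i' : Fin s'.length =>
              t <+: M'.row i' ∧ (M'.row i').getLast? = some c).card
            = (Finset.univ.filter fun r : Fin s'.length =>
              t <+: rot s' (r : ℕ) ∧ (rot s' (r : ℕ)).getLast? = some c).card :=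
          count_row_eq_count_rot π hp' M' (fun l => t <+: l ∧ l.getLast? = some c)
        have e6 := (rot_count_step s' c t (by omega)).symm
        have e7 : (Finset.univ.filter fun r : Fin s'.length => (c :: t) <+: rot s' (r : ℕ)).card
            = (Rng M' (c :: t)).card :=
          (count_row_eq_count_rot π hp' M' (fun l => (c :: t) <+: l)).symm
        rw [e1, e2, e3, e4, e5, e6, e7]
      -- decompose x = y ++ [c]
      have hxne : x ≠ [] := by intro h; rw [h] at hx; simp at hx
      obtain ⟨y, c, rfl⟩ : ∃ y c, x = y ++ [c] :=
        ⟨x.dropLast, x.getLast hxne, (List.dropLast_append_getLast hxne).symm⟩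
      have hylen : y.length = m := by
        have := hx
        simp at this
        omega
      set d0 : α := Classical.arbitrary α with hd0
      set G : Fin s.length → α := fun i => (M.row i).getD m d0 with hG
      set H : Fin s.length → α := fun i => (M'.row (Fin.cast hlen i)).getD m d0 with hH
      have hR : ∀ i : Fin s.length, i ∈ Rng M y ↔ Fin.cast hlen i ∈ Rng M' y := IH hm y hylen
      -- membership characterizations
      have memg : ∀ (dd : α) (i : Fin s.length),
          i ∈ Rng M (y ++ [dd]) ↔ (i ∈ Rng M y ∧ G i = dd) := by
        intro dd i
        rw [mem_Rng, mem_Rng]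
        have := snoc_prefix_iff y (M.row i) dd d0 (by rw [row_length π M i]; omega)
        rw [hylen] at this
        exact this
      have memg' : ∀ (dd : α) (i' : Fin s'.length),
          i' ∈ Rng M' (y ++ [dd]) ↔ (i' ∈ Rng M' y ∧ (M'.row i').getD m d0 = dd) := by
        intro dd i'
        rw [mem_Rng, mem_Rng]
        have := snoc_prefix_iff y (M'.row i') dd d0 (by rw [row_length π M' i']; omega)
        rw [hylen] at this
        exact this
      -- fiber count equality
      have hfib : ∀ dd : α,
          ((Rng M y).filter (fun i => G i = dd)).card
            = ((Rng M y).filter (fun i => H i = dd)).card := by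
        intro dd
        have hA : (Rng M y).filter (fun i => G i = dd) = Rng M (y ++ [dd]) := by
          ext i
          rw [Finset.mem_filter, memg dd i]
        have hB : ((Rng M y).filter (fun i => H i = dd)).card
            = (Rng M' (y ++ [dd])).card := by
          apply Finset.card_equiv (finCongr hlen)
          intro i
          rw [Finset.mem_filter, finCongr_apply, memg' dd (Fin.cast hlen i), hR i]
        rw [hA, hB]
        exact countEq (y ++ [dd]) (by simp [hylen])
      -- monotonicity
      have hGmono : ∀ i ∈ Rng M y, ∀ j ∈ Rng M y, i ≤ j → (π y).le (G i) (G j) := by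
        intro i hi j hj hij
        rw [mem_Rng] at hi hj
        have := mono_row π M (y := y) (by omega) d0 hi hj hij
        rw [hylen] at this
        exact this
      have hHmono : ∀ i ∈ Rng M y, ∀ j ∈ Rng M y, i ≤ j → (π y).le (H i) (H j) := by
        intro i hi j hj hij
        have hi' := (hR i).mp hi
        have hj' := (hR j).mp hj
        rw [mem_Rng] at hi' hj'
        have hij' : Fin.cast hlen i ≤ Fin.cast hlen j := by
          rw [Fin.le_def, Fin.coe_cast, Fin.coe_cast]
          exact Fin.le_def.mp hij
        have := mono_row π M' (y := y) (by omega) d0 hi' hj' hij'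
        rw [hylen] at this
        exact this
      have hGH : ∀ i ∈ Rng M y, G i = H i :=
        mono_fiber (π y) (Rng M y) G H hGmono hHmono hfib
      -- conclude
      constructor
      · intro hix
        have h1 := (memg c i).mp hix
        refine (memg' c (Fin.cast hlen i)).mpr ⟨(hR i).mp h1.1, ?_⟩
        show H i = c
        rw [← hGH i h1.1]
        exact h1.2
      · intro hix
        have h1 := (memg' c (Fin.cast hlen i)).mp hix
        have hiR : i ∈ Rng M y := (hR i).mpr h1.1
        refine (memg c i).mpr ⟨hiR, ?_⟩
        rw [hGH i hiR]
        exact h1.2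
  intro x hxlen
  refine ⟨main x.length hxlen x rfl, ?_⟩
  have c1 : ((Finset.range s.length).filter (fun j => x <+: rot s j)).card
      = (Finset.univ.filter fun r : Fin s.length => x <+: rot s (r : ℕ)).card := by
    rw [Finset.card_filter, Finset.card_filter, ← Fin.sum_univ_eq_sum_range]
  have c1' : ((Finset.range s'.length).filter (fun j => x <+: rot s' j)).card
      = (Finset.univ.filter fun r : Fin s'.length => x <+: rot s' (r : ℕ)).card := by
    rw [Finset.card_filter, Finset.card_filter, ← Fin.sum_univ_eq_sum_range]
  have c2 : (Finset.univ.filter fun r : Fin s.length => x <+: rot s (r : ℕ)).card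
      = (Rng M x).card := (count_row_eq_count_rot π hp M (fun l => x <+: l)).symm
  have c2' : (Finset.univ.filter fun r : Fin s'.length => x <+: rot s' (r : ℕ)).card
      = (Rng M' x).card := (count_row_eq_count_rot π hp' M' (fun l => x <+: l)).symm
  have c3 : (Rng M x).card = (Rng M' x).card :=
    Finset.card_equiv (finCongr hlen) (fun i => by
      rw [finCongr_apply]; exact main x.length hxlen x rfl i)
  rw [c1, c1', c2, c2', c3]
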